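/- arXiv:1607.06936 — 3 statements merged into one kernel-verified Lean document; each statement's English description precedes it below -/
import Mathlib

section
/- If G is a claw-free graph, then the independent domination number of G equals the domination number of G, i.e., i(G) = γ(G). -/
/-- A set `S` dominates `G` if every vertex is in `S` or adjacent to a vertex of `S`. -/
def IsDomSet {V : Type*} (G : SimpleGraph V) (S : Set V) : Prop :=
  ∀ v : V, v ∈ S ∨ ∃ u ∈ S, G.Adj u v

/-- The domination number of a finite graph. -/
noncomputable def domNum {V : Type*} (G : SimpleGraph V) [Fintype V] : ℕ :=
  sInf {n | ∃ S : Finset V, IsDomSet G ↑S ∧ S.card = n}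

/-- A graph is claw-free if it has no induced `K_{1,3}`. -/
def ClawFree {V : Type*} (G : SimpleGraph V) : Prop :=
  IsEmpty (completeBipartiteGraph (Fin 1) (Fin 3) ↪g G)

/-- The independent domination number of a finite graph. -/
noncomputable def indepDomNum {V : Type*} (G : SimpleGraph V) [Fintype V] : ℕ :=
  sInf {n | ∃ S : Finset V, IsDomSet G ↑S ∧
    (∀ u ∈ S, ∀ w ∈ S, u ≠ w → ¬ G.Adj u w) ∧ S.card = n}

lemma claw_aux {V : Type*} (G : SimpleGraph V)
    (hG : IsEmpty (completeBipartiteGraph (Fin 1) (Fin 3) ↪g G))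
    {c a b x : V} (hca : G.Adj c a) (hcb : G.Adj c b) (hcx : G.Adj c x)
    (hab : ¬ G.Adj a b) (hax : ¬ G.Adj a x) (hbx : ¬ G.Adj b x)
    (nab : a ≠ b) (nax : a ≠ x) (nbx : b ≠ x) : False := by
  classical
  refine hG.false ?_
  refine ⟨⟨Sum.elim (fun _ => c) (![a, b, x]), ?_⟩, ?_⟩
  · rintro (i | i) (j | j) h
    · simp [Subsingleton.elim i j]
    · exfalso
      simp only [Sum.elim_inl, Sum.elim_inr] at h
      fin_cases j <;> simp_all
    · exfalso
      simp only [Sum.elim_inl, Sum.elim_inr] at h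
      fin_cases i <;> simp_all
    · simp only [Sum.elim_inr] at h
      congr 1
      fin_cases i <;> fin_cases j <;> simp_all
  · rintro (i | i) (j | j) <;>
      simp only [DFunLike.coe, Function.Embedding.coeFn_mk, Sum.elim_inl, Sum.elim_inr,
        completeBipartiteGraph_adj, Sum.isLeft_inl, Sum.isRight_inr, Sum.isRight_inl,
        Sum.isLeft_inr]
    · simp [G.irrefl]
    · fin_cases j <;> simp [hca, hcb, hcx]
    · fin_cases i <;> simp [hca.symm, hcb.symm, hcx.symm]
    · have hba : ¬ G.Adj b a := fun h => hab h.symm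
      have hxa : ¬ G.Adj x a := fun h => hax h.symm
      have hxb : ¬ G.Adj x b := fun h => hbx h.symm
      fin_cases i <;> fin_cases j <;> simp [G.irrefl, hab, hax, hbx, hba, hxa, hxb]

/-- Every finset contains a maximal independent subset, which dominates it. -/
lemma exists_max_indep {V : Type*} (G : SimpleGraph V) (A : Finset V) :
    ∃ I ⊆ A, (∀ u ∈ I, ∀ w ∈ I, u ≠ w → ¬ G.Adj u w) ∧
      ∀ a ∈ A, a ∈ I ∨ ∃ i ∈ I, G.Adj i a := by
  classical
  set s : Finset (Finset V) :=
    A.powerset.filter (fun I => ∀ u ∈ I, ∀ w ∈ I, u ≠ w → ¬ G.Adj u w) with hs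
  have hne : s.Nonempty := ⟨∅, by simp [hs]⟩
  obtain ⟨I, hIs, hmax⟩ := s.exists_maximal hne
  rw [hs, Finset.mem_filter, Finset.mem_powerset] at hIs
  refine ⟨I, hIs.1, hIs.2, ?_⟩
  intro a ha
  by_cases haI : a ∈ I
  · exact Or.inl haI
  by_contra hcon
  push_neg at hcon
  obtain ⟨-, hnadj⟩ := hcon
  have hins : insert a I ∈ s := by
    rw [hs, Finset.mem_filter, Finset.mem_powerset]
    refine ⟨Finset.insert_subset ha hIs.1, ?_⟩
    intro u hu w hw huw
    rcases Finset.mem_insert.1 hu with h1 | huI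
    · subst h1
      rcases Finset.mem_insert.1 hw with h2 | hwI
      · exact absurd h2.symm huw
      · exact fun h => hnadj w hwI h.symm
    · rcases Finset.mem_insert.1 hw with h2 | hwI
      · subst h2
        exact hnadj u huI
      · exact hIs.2 u huI w hwI huw
  exact haI (hmax hins (Finset.subset_insert a I) (Finset.mem_insert_self a I))

/-- From any dominating finset, get an independent dominating finset of no larger size. -/
lemma exists_indep_dom {V : Type*} [Fintype V] (G : SimpleGraph V) (hG : ClawFree G)
    (D : Finset V) (hD : IsDomSet G ↑D) :
    ∃ S : Finset V, IsDomSet G ↑S ∧ (∀ u ∈ S, ∀ w ∈ S, u ≠ w → ¬ G.Adj u w) ∧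
      S.card ≤ D.card := by
  classical
  obtain ⟨I, hID, hIind, hImax⟩ := exists_max_indep G D
  set U : Finset V :=
    Finset.univ.filter (fun v => v ∉ I ∧ ∀ i ∈ I, ¬ G.Adj i v) with hU
  obtain ⟨I', hI'U, hI'ind, hI'max⟩ := exists_max_indep G U
  have hdisj : Disjoint I I' := by
    rw [Finset.disjoint_left]
    intro v hvI hvI'
    have := hI'U hvI'
    rw [hU, Finset.mem_filter] at this
    exact this.2.1 hvI
  have hUI : ∀ v ∈ I', v ∉ I ∧ ∀ i ∈ I, ¬ G.Adj i v := by
    intro v hv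
    have := hI'U hv
    rw [hU, Finset.mem_filter] at this
    exact this.2
  refine ⟨I ∪ I', ?_, ?_, ?_⟩
  · -- dominating
    intro v
    by_cases hv : v ∈ I ∨ ∃ i ∈ I, G.Adj i v
    · rcases hv with hv | ⟨i, hi, hadj⟩
      · exact Or.inl (by simp [hv])
      · exact Or.inr ⟨i, by simp [hi], hadj⟩
    push_neg at hv
    have hvU : v ∈ U := by
      rw [hU, Finset.mem_filter]
      exact ⟨Finset.mem_univ v, hv.1, hv.2⟩
    rcases hI'max v hvU with h | ⟨i, hi, hadj⟩
    · exact Or.inl (by simp [h])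
    · exact Or.inr ⟨i, by simp [hi], hadj⟩
  · -- independent
    intro u hu w hw huw
    rcases Finset.mem_union.1 hu with hu | hu <;> rcases Finset.mem_union.1 hw with hw | hw
    · exact hIind u hu w hw huw
    · exact (hUI w hw).2 u hu
    · exact fun h => (hUI u hu).2 w hw h.symm
    · exact hI'ind u hu w hw huw
  · -- cardinality
    -- map each u ∈ I' to a vertex of D \ I dominating it
    have hdom : ∀ u : V, ∃ d : V, u ∈ I' → d ∈ D \ I ∧ (d = u ∨ G.Adj d u) := by
      intro u
      by_cases hu : u ∈ I'
      · obtain ⟨hnI, hnadj⟩ := hUI u hu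
        rcases hD u with hd | ⟨d, hd, hadj⟩
        · exact ⟨u, fun _ => ⟨Finset.mem_sdiff.2 ⟨by exact_mod_cast hd, hnI⟩, Or.inl rfl⟩⟩
        · refine ⟨d, fun _ => ⟨Finset.mem_sdiff.2 ⟨by exact_mod_cast hd, ?_⟩, Or.inr hadj⟩⟩
          intro hdI
          exact hnadj d hdI hadj
      · exact ⟨u, fun h => absurd h hu⟩
    choose f hf using hdom
    have hcard : I'.card ≤ (D \ I).card := by
      apply Finset.card_le_card_of_injOn f
      · intro u hu
        exact (hf u hu).1
      · intro u hu w hw hfe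
        simp only [Finset.mem_coe] at hu hw
        by_contra huw
        obtain ⟨d, hdDI, hdu, hdw⟩ : ∃ d, d ∈ D \ I ∧ (d = u ∨ G.Adj d u) ∧
            (d = w ∨ G.Adj d w) := ⟨f u, (hf u hu).1, (hf u hu).2, hfe ▸ (hf w hw).2⟩
        have hdD : d ∈ D := (Finset.mem_sdiff.1 hdDI).1
        have hdnI : d ∉ I := (Finset.mem_sdiff.1 hdDI).2
        obtain ⟨i, hi, hadj_i⟩ := (hImax d hdD).resolve_left hdnI
        have huwadj : ¬ G.Adj u w := hI'ind u hu w hw huw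
        rcases hdu with rfl | hdu
        · rcases hdw with h | hdw
          · exact huw h
          · exact huwadj hdw
        rcases hdw with rfl | hdw
        · exact huwadj hdu.symm
        have hui : ¬ G.Adj u i := fun h => (hUI u hu).2 i hi h.symm
        have hwi : ¬ G.Adj w i := fun h => (hUI w hw).2 i hi h.symm
        have hune : u ≠ i := fun h => (hUI u hu).1 (h ▸ hi)
        have hwne : w ≠ i := fun h => (hUI w hw).1 (h ▸ hi)
        exact claw_aux G hG hdu hdw hadj_i.symm huwadj hui hwi huw hune hwne
    have : (I ∪ I').card = I.card + I'.card := Finset.card_union_of_disjoint hdisj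
    rw [this]
    calc I.card + I'.card ≤ I.card + (D \ I).card := by omega
      _ = D.card := by
          rw [Finset.card_sdiff_of_subset hID]
          have := Finset.card_le_card hID
          omega

theorem stmt_0 {V : Type*} [Fintype V] (G : SimpleGraph V) (hG : ClawFree G) :
    indepDomNum G = domNum G := by
  classical
  apply le_antisymm
  · -- indepDomNum ≤ domNum
    have hdne : {n | ∃ S : Finset V, IsDomSet G ↑S ∧ S.card = n}.Nonempty := by
      refine ⟨Finset.univ.card, Finset.univ, ?_, rfl⟩
      intro v; exact Or.inl (by simp)
    obtain ⟨D, hD, hDcard⟩ := Nat.sInf_mem hdne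
    obtain ⟨S, hSdom, hSind, hScard⟩ := exists_indep_dom G hG D hD
    calc indepDomNum G ≤ S.card := Nat.sInf_le ⟨S, hSdom, hSind, rfl⟩
      _ ≤ D.card := hScard
      _ = domNum G := hDcard
  · -- domNum ≤ indepDomNum
    have hine : {n | ∃ S : Finset V, IsDomSet G ↑S ∧
        (∀ u ∈ S, ∀ w ∈ S, u ≠ w → ¬ G.Adj u w) ∧ S.card = n}.Nonempty := by
      obtain ⟨S, hSdom, hSind, _⟩ := exists_indep_dom G hG Finset.univ
        (fun v => Or.inl (by simp))
      exact ⟨S.card, S, hSdom, hSind, rfl⟩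
    obtain ⟨S, hSdom, hSind, hScard⟩ := Nat.sInf_mem hine
    calc domNum G ≤ S.card := Nat.sInf_le ⟨S, hSdom, rfl⟩
      _ = indepDomNum G := hScard
end

section
/- Let G be a claw-free graph with independent dominating set Γ = {v_1,…,v_k}. If j_1, j_2, j_3, j_4 are distinct indices in [k], x is a common neighbor of v_{j_1} and v_{j_2} with N(x) ∩ Γ = {v_{j_1}, v_{j_2}}, and y is a common neighbor of v_{j_3} and v_{j_4} with N(y) ∩ Γ = {v_{j_3}, v_{j_4}}, then x and y are not adjacent. -/
set_option maxHeartbeats 1000000 in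
theorem stmt_2 {V : Type*} [Fintype V] (G : SimpleGraph V) (hG : ClawFree G)
    (k : ℕ) (v : Fin k → V) (hinj : Function.Injective v)
    (hdom : IsDomSet G (Set.range v))
    (hind : ∀ i j : Fin k, i ≠ j → ¬ G.Adj (v i) (v j))
    (j1 j2 j3 j4 : Fin k)
    (hd : j1 ≠ j2 ∧ j1 ≠ j3 ∧ j1 ≠ j4 ∧ j2 ≠ j3 ∧ j2 ≠ j4 ∧ j3 ≠ j4)
    (x y : V) (hx : x ∉ Set.range v) (hy : y ∉ Set.range v)
    (hxN : {u | u ∈ Set.range v ∧ G.Adj x u} = {v j1, v j2})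
    (hyN : {u | u ∈ Set.range v ∧ G.Adj y u} = {v j3, v j4}) :
    ¬ G.Adj x y := by
  intro hxy
  have h1 : G.Adj x (v j1) := by
    have : v j1 ∈ {u | u ∈ Set.range v ∧ G.Adj x u} := by rw [hxN]; left; rfl
    exact this.2
  have h2 : G.Adj x (v j2) := by
    have : v j2 ∈ {u | u ∈ Set.range v ∧ G.Adj x u} := by rw [hxN]; right; rfl
    exact this.2
  have hy1 : ¬ G.Adj y (v j1) := by
    intro h
    have : v j1 ∈ {u | u ∈ Set.range v ∧ G.Adj y u} := ⟨⟨j1, rfl⟩, h⟩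
    rw [hyN] at this
    rcases this with h' | h'
    · exact hd.2.1 (hinj h')
    · exact hd.2.2.1 (hinj h')
  have hy2 : ¬ G.Adj y (v j2) := by
    intro h
    have : v j2 ∈ {u | u ∈ Set.range v ∧ G.Adj y u} := ⟨⟨j2, rfl⟩, h⟩
    rw [hyN] at this
    rcases this with h' | h'
    · exact hd.2.2.2.1 (hinj h')
    · exact hd.2.2.2.2.1 (hinj h')
  have h12 : ¬ G.Adj (v j1) (v j2) := hind j1 j2 hd.1
  have hne12 : v j1 ≠ v j2 := fun h => hd.1 (hinj h)
  have hxne1 : x ≠ v j1 := fun h => hx ⟨j1, h.symm⟩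
  have hxne2 : x ≠ v j2 := fun h => hx ⟨j2, h.symm⟩
  have hyne1 : y ≠ v j1 := fun h => hy ⟨j1, h.symm⟩
  have hyne2 : y ≠ v j2 := fun h => hy ⟨j2, h.symm⟩
  have hxyne : x ≠ y := hxy.ne
  let f : Fin 1 ⊕ Fin 3 → V := fun a => match a with
    | Sum.inl _ => x
    | Sum.inr 0 => v j1
    | Sum.inr 1 => v j2
    | Sum.inr 2 => y
  refine hG.false ⟨⟨f, ?_⟩, ?_⟩
  · intro a b h
    rcases a with a | a <;> rcases b with b | b <;>
      fin_cases a <;> fin_cases b <;>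
      simp_all [f] <;> simp_all [eq_comm]
  · intro a b
    change G.Adj (f a) (f b) ↔ _
    rcases a with a | a <;> rcases b with b | b <;>
      fin_cases a <;> fin_cases b <;>
      simp_all [f, G.adj_comm]
end

section
/- Let G be a claw-free graph. Then there exists a minimum dominating set of G that is independent. -/
lemma claw_aux_s14 {V : Type*} (G : SimpleGraph V) (hG : ClawFree G)
    {u x y z : V} (hux : G.Adj u x) (huy : G.Adj u y) (huz : G.Adj u z)
    (hxy : ¬ G.Adj x y) (hxz : ¬ G.Adj x z) (hyz : ¬ G.Adj y z)
    (nxy : x ≠ y) (nxz : x ≠ z) (nyz : y ≠ z) : False := by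
  have hux' := hux.ne
  have huy' := huy.ne
  have huz' := huz.ne
  apply hG.false
  refine ⟨⟨Sum.elim (fun _ => u) ![x, y, z], ?_⟩, ?_⟩
  · rintro (a | a) (b | b) h <;>
      simp only [Sum.elim_inl, Sum.elim_inr] at h
    · simp [Subsingleton.elim a b]
    · exfalso; fin_cases b <;> simp_all
    · exfalso; fin_cases a <;> simp_all
    · fin_cases a <;> fin_cases b <;> simp_all
  · rintro (a | a) (b | b) <;>
      simp only [DFunLike.coe] <;> simp only [Function.Embedding.coeFn_mk, Sum.elim_inl, Sum.elim_inr,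
        completeBipartiteGraph_adj] <;> simp only [Sum.isLeft_inl, Sum.isRight_inl,
        Sum.isLeft_inr, Sum.isRight_inr]
    · simp
    · fin_cases b <;> simp_all
    · fin_cases a <;> simp_all [G.adj_comm]
    · fin_cases a <;> fin_cases b <;> simp_all [G.adj_comm]

theorem stmt_14 {V : Type*} [Fintype V] (G : SimpleGraph V) (hG : ClawFree G) :
    ∃ S : Finset V, IsDomSet G ↑S ∧
      (∀ u ∈ S, ∀ w ∈ S, u ≠ w → ¬ G.Adj u w) ∧ S.card = domNum G := by
  classical
  set m : Finset V → ℕ := fun S => ((S ×ˢ S).filter fun p => G.Adj p.1 p.2).card with hm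
  -- the set of sizes of dominating sets is nonempty
  have huniv : IsDomSet G ↑(Finset.univ : Finset V) := fun v => Or.inl (by simp)
  have hD : domNum G ∈ {n | ∃ S : Finset V, IsDomSet G ↑S ∧ S.card = n} :=
    Nat.sInf_mem ⟨_, Finset.univ, huniv, rfl⟩
  obtain ⟨S0, hS0dom, hS0card⟩ := hD
  set T : Set ℕ := {n | ∃ S : Finset V, IsDomSet G ↑S ∧ S.card = domNum G ∧ m S = n} with hT
  have hTne : T.Nonempty := ⟨m S0, S0, hS0dom, hS0card, rfl⟩
  obtain ⟨S, hdom, hcard, hmin⟩ := Nat.sInf_mem hTne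
  refine ⟨S, hdom, ?_, hcard⟩
  intro u hu w hw hne hadj
  -- u has a private neighbor outside S
  have hpriv : ∃ x, x ∉ S ∧ G.Adj u x ∧ ∀ s ∈ S, s ≠ u → ¬ G.Adj s x := by
    by_contra h
    push_neg at h
    have hdom' : IsDomSet G ↑(S.erase u) := by
      intro v
      rcases hdom v with hv | ⟨s, hs, hsv⟩
      · by_cases hvu : v = u
        · exact Or.inr ⟨w, by simp [Finset.mem_erase, hne.symm, hw], hvu ▸ hadj.symm⟩
        · exact Or.inl (by simp [Finset.mem_erase, hvu, hv])
      · by_cases hsu : s = u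
        · subst hsu
          by_cases hv : v ∈ S
          · exact Or.inl (by simp [Finset.mem_erase, hsv.ne', hv])
          · obtain ⟨s', hs', hs'u, hs'v⟩ := h v hv hsv
            exact Or.inr ⟨s', by simp [Finset.mem_erase, hs'u, hs'], hs'v⟩
        · exact Or.inr ⟨s, by simp [Finset.mem_erase, hsu, hs], hsv⟩
    have hle : domNum G ≤ (S.erase u).card := Nat.sInf_le ⟨S.erase u, hdom', rfl⟩
    have hec : (S.erase u).card = S.card - 1 := Finset.card_erase_of_mem hu
    have hpos : 0 < S.card := Finset.card_pos.mpr ⟨u, hu⟩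
    omega
  obtain ⟨x, hxS, hux, hxpriv⟩ := hpriv
  set S' : Finset V := insert x (S.erase u) with hS'
  have hxe : x ∉ S.erase u := fun h => hxS (Finset.mem_of_mem_erase h)
  have hcard' : S'.card = domNum G := by
    rw [hS', Finset.card_insert_of_notMem hxe, Finset.card_erase_of_mem hu]
    have hpos : 0 < S.card := Finset.card_pos.mpr ⟨u, hu⟩
    omega
  have hdom' : IsDomSet G ↑S' := by
    intro v
    rcases hdom v with hv | ⟨s, hs, hsv⟩
    · by_cases hvu : v = u
      · refine Or.inr ⟨w, ?_, hvu ▸ hadj.symm⟩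
        simp [hS', Finset.mem_erase, hne.symm, hw]
      · exact Or.inl (by simp [hS', Finset.mem_erase, hvu, hv])
    · by_cases hsu : s = u
      · replace hsv : G.Adj u v := hsu ▸ hsv
        by_cases hv : v ∈ S
        · exact Or.inl (by simp [hS', Finset.mem_erase, hsv.ne', hv])
        · by_cases hvx : v = x
          · exact Or.inl (by simp [hS', hvx])
          · by_cases hp : ∀ s' ∈ S, s' ≠ u → ¬ G.Adj s' v
            · -- v is a private neighbor of u; claw-freeness forces x ~ v
              have hxv : G.Adj x v := by
                by_contra hxv
                exact claw_aux_s14 G hG hux hsv hadj hxv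
                  (fun h => hxpriv w hw hne.symm h.symm)
                  (fun h => hp w hw hne.symm h.symm)
                  (Ne.symm hvx) (fun h => hxS (h ▸ hw)) (fun h => hv (h ▸ hw))
              exact Or.inr ⟨x, by simp [hS'], hxv⟩
            · push_neg at hp
              obtain ⟨s', hs', hs'u, hs'v⟩ := hp
              exact Or.inr ⟨s', by simp [hS', Finset.mem_erase, hs'u, hs'], hs'v⟩
      · exact Or.inr ⟨s, by simp [hS', Finset.mem_erase, hsu, hs], hsv⟩
  -- the edge count strictly decreases
  have hlt : m S' < m S := by
    apply Finset.card_lt_card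
    constructor
    · intro p hp
      rw [Finset.mem_filter, Finset.mem_product] at hp ⊢
      obtain ⟨⟨hp1, hp2⟩, hpadj⟩ := hp
      have key : ∀ a ∈ S', ∀ b ∈ S', G.Adj a b → a ≠ x := by
        intro a ha b hb hab hax
        subst hax
        rcases Finset.mem_insert.mp hb with hbx | hbe
        · exact G.irrefl (hbx ▸ hab)
        · exact hxpriv b (Finset.mem_of_mem_erase hbe)
            (Finset.ne_of_mem_erase hbe) hab.symm
      have h1 : p.1 ≠ x := key p.1 hp1 p.2 hp2 hpadj
      have h2 : p.2 ≠ x := key p.2 hp2 p.1 hp1 hpadj.symm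
      have hp1' : p.1 ∈ S.erase u := by
        rcases Finset.mem_insert.mp hp1 with h | h; · exact absurd h h1
        exact h
      have hp2' : p.2 ∈ S.erase u := by
        rcases Finset.mem_insert.mp hp2 with h | h; · exact absurd h h2
        exact h
      exact ⟨⟨Finset.mem_of_mem_erase hp1', Finset.mem_of_mem_erase hp2'⟩, hpadj⟩
    · intro hsub
      have huw : (u, w) ∈ (S ×ˢ S).filter fun p => G.Adj p.1 p.2 := by
        rw [Finset.mem_filter, Finset.mem_product]; exact ⟨⟨hu, hw⟩, hadj⟩
      have := hsub huw
      rw [Finset.mem_filter, Finset.mem_product] at this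
      have huS' : u ∈ S' := this.1.1
      rcases Finset.mem_insert.mp huS' with h | h
      · exact hxS (h ▸ hu)
      · exact (Finset.notMem_erase u S) h
  have : sInf T ≤ m S' := Nat.sInf_le ⟨S', hdom', hcard', rfl⟩
  omega
end
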